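/- For 2×2 matrices: if rank-1 matrices {A_a}_{a∈X} and {B_b}_{b∈Y} (all of rank exactly 1) span M₂(ℂ) each (via POVM completeness), R is any nonzero 2×2 matrix, and A_a R* B_b ∝ M_{f(a,b)} for the product family {Mᵢ} = {|0⟩⟨0|, |1⟩⟨0|, |e₀⟩⟨1|, |e₁⟩⟨1|}, then {|e₀⟩⟨e₀|, |e₁⟩⟨e₁|} = {|0⟩⟨0|, |1⟩⟨1|}. (Sketch: choose a with A_a R* ≠ 0; then the span of {M_{f(a,b)} : A_a R* B_b ≠ 0} equals {|x⟩⟨z| : |x⟩ ∈ range(A_a), z ∈ ℂ²}, a 2-dimensional space of matrices with fixed 1-dimensional range, forcing the stated conclusion.) -/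

import Mathlib

open Matrix

noncomputable section

/-- The rank-1 operator `|M⟩⟩⟨⟨M|` on `ℂ² ⊗ ℂ²` associated with a `2×2` matrix `M`. -/
def dop (M : Matrix (Fin 2) (Fin 2) ℂ) :
    Matrix (Fin 2 × Fin 2) (Fin 2 × Fin 2) ℂ :=
  Matrix.of fun p q => M p.1 p.2 * star (M q.1 q.2)

lemma povm_span {X : Type} [Fintype X] (A : X → Matrix (Fin 2) (Fin 2) ℂ)
    (hA : ∑ a, dop (A a) = 1) (C : Matrix (Fin 2) (Fin 2) ℂ) :
    C = ∑ a, (∑ p : Fin 2 × Fin 2, star (A a p.1 p.2) * C p.1 p.2) • A a := by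
  have h1 : ∀ p q : Fin 2 × Fin 2,
      (∑ a, A a p.1 p.2 * star (A a q.1 q.2)) = if p = q then 1 else 0 := by
    intro p q
    have := congrFun (congrFun hA p) q
    simpa [dop, Matrix.sum_apply, Matrix.one_apply] using this
  ext i j
  rw [Matrix.sum_apply]
  simp only [Matrix.smul_apply, smul_eq_mul]
  calc C i j = ∑ q : Fin 2 × Fin 2, (if (i, j) = q then (1:ℂ) else 0) * C q.1 q.2 := by
        simp
    _ = ∑ q : Fin 2 × Fin 2, (∑ a, A a i j * star (A a q.1 q.2)) * C q.1 q.2 := by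
        refine Finset.sum_congr rfl fun q _ => ?_
        rw [h1 (i, j) q]
    _ = ∑ q : Fin 2 × Fin 2, ∑ a, A a i j * star (A a q.1 q.2) * C q.1 q.2 := by
        simp [Finset.sum_mul]
    _ = ∑ a, ∑ q : Fin 2 × Fin 2, A a i j * star (A a q.1 q.2) * C q.1 q.2 :=
        Finset.sum_comm
    _ = ∑ a, (∑ q : Fin 2 × Fin 2, star (A a q.1 q.2) * C q.1 q.2) * A a i j := by
        refine Finset.sum_congr rfl fun a _ => ?_
        rw [Finset.sum_mul]
        exact Finset.sum_congr rfl fun q _ => by ring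

lemma rank_one_decomp (A : Matrix (Fin 2) (Fin 2) ℂ) (h : A.rank = 1) :
    ∃ x y : Fin 2 → ℂ, A = Matrix.of fun i j => x i * y j := by
  have hdet : A.det = 0 := by
    by_contra hd
    have h2 : A.rank = 2 := by
      have := Matrix.rank_of_isUnit A
        ((Matrix.isUnit_iff_isUnit_det A).mpr (isUnit_iff_ne_zero.mpr hd))
      simpa using this
    omega
  have hd : A 0 0 * A 1 1 - A 0 1 * A 1 0 = 0 := by
    rw [Matrix.det_fin_two] at hdet; linear_combination hdet
  by_cases h00 : A 0 0 ≠ 0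
  · refine ⟨![A 0 0, A 1 0], ![1, A 0 1 / A 0 0], ?_⟩
    ext i j
    fin_cases i <;> fin_cases j <;>
      simp only [Matrix.of_apply, Fin.zero_eta, Fin.mk_one, Fin.isValue, Matrix.cons_val_zero,
        Matrix.cons_val_one, Matrix.head_cons, mul_one] <;>
      field_simp <;> linear_combination hd
  push_neg at h00
  by_cases h01 : A 0 1 ≠ 0
  · refine ⟨![A 0 1, A 1 1], ![0, 1], ?_⟩
    have h10 : A 1 0 = 0 := by
      have : A 0 1 * A 1 0 = 0 := by linear_combination -hd + A 1 1 * h00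
      exact (mul_eq_zero.mp this).resolve_left h01
    ext i j
    fin_cases i <;> fin_cases j <;>
      simp [h00, h10]
  push_neg at h01
  refine ⟨![0, 1], ![A 1 0, A 1 1], ?_⟩
  ext i j
  fin_cases i <;> fin_cases j <;> simp [h00, h01]

lemma mul_outer (x y : Fin 2 → ℂ) (S : Matrix (Fin 2) (Fin 2) ℂ) :
    (Matrix.of fun i j => x i * y j) * S = Matrix.of fun i j => x i * (∑ k, y k * S k j) := by
  ext i j
  simp [Matrix.mul_apply, Fin.sum_univ_two]
  ring

lemma proj_eq0 (v : Fin 2 → ℂ) (hv : star (v 0) * v 0 + star (v 1) * v 1 = 1) (h : v 1 = 0) :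
    (Matrix.of fun i j => v i * star (v j)) = !![1,0;0,0] := by
  have hv' : star (v 0) * v 0 = 1 := by rw [h] at hv; simpa using hv
  have hv'' : v 0 * (starRingEnd ℂ) (v 0) = 1 := by simpa [mul_comm] using hv'
  ext i j
  fin_cases i <;> fin_cases j <;> simp [h, hv'']

lemma proj_eq1 (v : Fin 2 → ℂ) (hv : star (v 0) * v 0 + star (v 1) * v 1 = 1) (h : v 0 = 0) :
    (Matrix.of fun i j => v i * star (v j)) = !![0,0;0,1] := by
  have hv' : star (v 1) * v 1 = 1 := by rw [h] at hv; simpa using hv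
  have hv'' : v 1 * (starRingEnd ℂ) (v 1) = 1 := by simpa [mul_comm] using hv'
  ext i j
  fin_cases i <;> fin_cases j <;> simp [h, hv'']

lemma final_step (e : Fin 2 → Fin 2 → ℂ)
    (he : ∀ i j, ∑ p : Fin 2, star (e i p) * e j p = if i = j then 1 else 0)
    (m i : Fin 2) (h : e m i = 0) :
    ({Matrix.of fun i j => e 0 i * star (e 0 j),
      Matrix.of fun i j => e 1 i * star (e 1 j)} : Set (Matrix (Fin 2) (Fin 2) ℂ)) =
      {!![1, 0; 0, 0], !![0, 0; 0, 1]} := by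
  have hn : ∀ m' : Fin 2, star (e m' 0) * e m' 0 + star (e m' 1) * e m' 1 = 1 := by
    intro m'; simpa [Fin.sum_univ_two] using he m' m'
  have ho01 : star (e 0 0) * e 1 0 + star (e 0 1) * e 1 1 = 0 := by
    simpa [Fin.sum_univ_two] using he 0 1
  have ho10 : star (e 1 0) * e 0 0 + star (e 1 1) * e 0 1 = 0 := by
    simpa [Fin.sum_univ_two] using he 1 0
  fin_cases m <;> fin_cases i <;> simp only [Fin.isValue, Fin.zero_eta, Fin.mk_one] at h
  · -- e 0 0 = 0
    have h11 : e 1 1 = 0 := by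
      have h01 : e 0 1 ≠ 0 := by
        intro hz
        have := hn 0; rw [h, hz] at this; simp at this
      have hh : star (e 1 1) * e 0 1 = 0 := by
        have := ho10; rw [h] at this; simpa using this
      have := (mul_eq_zero.mp hh).resolve_right h01
      simpa using this
    rw [proj_eq1 (e 0) (hn 0) h, proj_eq0 (e 1) (hn 1) h11]
    exact Set.pair_comm _ _
  · -- e 0 1 = 0
    have h10 : e 1 0 = 0 := by
      have h00 : e 0 0 ≠ 0 := by
        intro hz
        have := hn 0; rw [h, hz] at this; simp at this
      have hh : star (e 1 0) * e 0 0 = 0 := by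
        have := ho10; rw [h] at this; simpa using this
      have := (mul_eq_zero.mp hh).resolve_right h00
      simpa using this
    rw [proj_eq0 (e 0) (hn 0) h, proj_eq1 (e 1) (hn 1) h10]
  · -- e 1 0 = 0
    have h01 : e 0 1 = 0 := by
      have h11 : e 1 1 ≠ 0 := by
        intro hz
        have := hn 1; rw [h, hz] at this; simp at this
      have hh : star (e 0 1) * e 1 1 = 0 := by
        have := ho01; rw [h] at this; simpa using this
      have := (mul_eq_zero.mp hh).resolve_right h11
      simpa using this
    rw [proj_eq0 (e 0) (hn 0) h01, proj_eq1 (e 1) (hn 1) h]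
  · -- e 1 1 = 0
    have h00 : e 0 0 = 0 := by
      have h10 : e 1 0 ≠ 0 := by
        intro hz
        have := hn 1; rw [h, hz] at this; simp at this
      have hh : star (e 0 0) * e 1 0 = 0 := by
        have := ho01; rw [h] at this; simpa using this
      have := (mul_eq_zero.mp hh).resolve_right h10
      simpa using this
    rw [proj_eq1 (e 0) (hn 0) h00, proj_eq0 (e 1) (hn 1) h]
    exact Set.pair_comm _ _

/-- If rank-1 families `{A_a}`, `{B_b}` of `2×2` matrices are complete POVMs (in double-ket
form), `R` is a nonzero `2×2` matrix, and `A_a R* B_b ∝ M_{f(a,b)}` for the product family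
`{Mᵢ} = {|0⟩⟨0|, |1⟩⟨0|, |e₀⟩⟨1|, |e₁⟩⟨1|}`, then
`{|e₀⟩⟨e₀|, |e₁⟩⟨e₁|} = {|0⟩⟨0|, |1⟩⟨1|}`. -/
theorem product_basis_localization_rank_one_case
    {X Y : Type} [Fintype X] [Fintype Y]
    (e : Fin 2 → Fin 2 → ℂ)
    (he : ∀ i j, ∑ p : Fin 2, star (e i p) * e j p = if i = j then 1 else 0)
    (M : Fin 4 → Matrix (Fin 2) (Fin 2) ℂ)
    (hM : M = ![!![1, 0; 0, 0], !![0, 0; 1, 0],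
      Matrix.of fun i j => e 0 i * (if j = 1 then 1 else 0),
      Matrix.of fun i j => e 1 i * (if j = 1 then 1 else 0)])
    (R : Matrix (Fin 2) (Fin 2) ℂ) (hR : R ≠ 0)
    (A : X → Matrix (Fin 2) (Fin 2) ℂ) (B : Y → Matrix (Fin 2) (Fin 2) ℂ)
    (f : X → Y → Fin 4)
    (hA : ∑ a, dop (A a) = 1) (hB : ∑ b, dop (B b) = 1)
    (hArk : ∀ a, (A a).rank = 1) (hBrk : ∀ b, (B b).rank = 1)
    (hloc : ∀ a b, ∃ α : ℂ, A a * R.map star * B b = α • M (f a b)) :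
    ({Matrix.of fun i j => e 0 i * star (e 0 j),
      Matrix.of fun i j => e 1 i * star (e 1 j)} : Set (Matrix (Fin 2) (Fin 2) ℂ)) =
      {!![1, 0; 0, 0], !![0, 0; 0, 1]} := by
  classical
  subst hM
  -- Step A: find a₀ with A a₀ * R* ≠ 0
  obtain ⟨a₀, ha₀⟩ : ∃ a, A a * R.map star ≠ 0 := by
    by_contra hcon
    push_neg at hcon
    have hid := povm_span A hA 1
    have hz : R.map star = 0 := by
      calc R.map star = 1 * R.map star := (one_mul _).symm
        _ = (∑ a, (∑ p : Fin 2 × Fin 2,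
              star (A a p.1 p.2) * (1 : Matrix (Fin 2) (Fin 2) ℂ) p.1 p.2) • A a)
            * R.map star := by rw [← hid]
        _ = ∑ a, (∑ p : Fin 2 × Fin 2,
              star (A a p.1 p.2) * (1 : Matrix (Fin 2) (Fin 2) ℂ) p.1 p.2)
            • (A a * R.map star) := by
            rw [Finset.sum_mul]
            exact Finset.sum_congr rfl fun a _ => Matrix.smul_mul _ _ _
        _ = 0 := Finset.sum_eq_zero fun a _ => by rw [hcon a, smul_zero]
    apply hR
    ext i j
    have := congrFun (congrFun hz i) j
    simpa [Matrix.map_apply] using this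
  -- Step B: rank-1 decomposition
  obtain ⟨x, y, hxy⟩ := rank_one_decomp (A a₀) (hArk a₀)
  set w : Fin 2 → ℂ := fun j => ∑ k, y k * (R.map star) k j with hwdef
  have hT : A a₀ * R.map star = Matrix.of fun i j => x i * w j := by
    rw [hxy]; exact mul_outer x y _
  obtain ⟨i₀, j₀, hij⟩ : ∃ i j, x i * w j ≠ 0 := by
    by_contra hcon
    push_neg at hcon
    exact ha₀ (by rw [hT]; ext i j; simpa using hcon i j)
  have hx0 : x i₀ ≠ 0 := left_ne_zero_of_mul hij
  have hw0 : w j₀ ≠ 0 := right_ne_zero_of_mul hij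
  set z : Y → Fin 2 → ℂ := fun b l => ∑ k, w k * B b k l with hzdef
  have hTB : ∀ b, A a₀ * R.map star * B b = Matrix.of fun i l => x i * z b l := by
    intro b; rw [hT]; exact mul_outer x w (B b)
  -- Step D: key existence
  have main : ∀ c : Fin 2, ∃ b, A a₀ * R.map star * B b ≠ 0 ∧
      ∃ i, (![!![1, 0; 0, 0], !![0, 0; 1, 0],
        Matrix.of fun i j => e 0 i * (if j = 1 then 1 else 0),
        Matrix.of fun i j => e 1 i * (if j = 1 then 1 else 0)]) (f a₀ b) i c ≠ 0 := by
    intro c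
    by_contra hcon
    push_neg at hcon
    have hzero : ∀ b, (A a₀ * R.map star * B b) i₀ c = 0 := by
      intro b
      by_cases hb : A a₀ * R.map star * B b = 0
      · rw [hb]; simp
      · obtain ⟨α, hα⟩ := hloc a₀ b
        rw [hα, Matrix.smul_apply, hcon b hb i₀, smul_zero]
    set Cc : Matrix (Fin 2) (Fin 2) ℂ :=
      Matrix.of (fun k l => if k = j₀ then (w j₀)⁻¹ * (if l = c then 1 else 0) else 0)
      with hCc
    have hTC : A a₀ * R.map star * Cc
        = Matrix.of fun i l => x i * (if l = c then 1 else 0) := by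
      rw [hT, mul_outer x w Cc]
      ext i l
      have hsum2 : (∑ k, w k * Cc k l) = w j₀ * ((w j₀)⁻¹ * (if l = c then 1 else 0)) := by
        simp [hCc, mul_ite, mul_zero, Finset.sum_ite_eq']
      simp only [Matrix.of_apply]
      rw [hsum2, ← mul_assoc (w j₀), mul_inv_cancel₀ hw0, one_mul]
    have hdec := povm_span B hB Cc
    have hsum : A a₀ * R.map star * Cc
        = ∑ b, (∑ p : Fin 2 × Fin 2, star (B b p.1 p.2) * Cc p.1 p.2)
            • (A a₀ * R.map star * B b) := by
      conv_lhs => rw [hdec]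
      rw [Finset.mul_sum]
      exact Finset.sum_congr rfl fun b _ => Matrix.mul_smul _ _ _
    have h1 : (A a₀ * R.map star * Cc) i₀ c = x i₀ := by rw [hTC]; simp
    have h2 : (A a₀ * R.map star * Cc) i₀ c = 0 := by
      rw [hsum, Matrix.sum_apply]
      exact Finset.sum_eq_zero fun b _ => by rw [Matrix.smul_apply, hzero b, smul_zero]
    exact hx0 (h1 ▸ h2 ▸ rfl)
  -- Step E
  obtain ⟨b₁, hb₁, i₁, hbM₁⟩ := main 0
  have h4 : ∀ v : Fin 4, v = 0 ∨ v = 1 ∨ v = 2 ∨ v = 3 := by decide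
  have hf₁ : f a₀ b₁ = 0 ∨ f a₀ b₁ = 1 := by
    rcases h4 (f a₀ b₁) with h|h|h|h
    · exact Or.inl h
    · exact Or.inr h
    · rw [h] at hbM₁; exact absurd (by fin_cases i₁ <;> simp) hbM₁
    · rw [h] at hbM₁; exact absurd (by fin_cases i₁ <;> simp) hbM₁
  obtain ⟨α₁, hα₁⟩ := hloc a₀ b₁
  have hα₁0 : α₁ ≠ 0 := by rintro rfl; rw [zero_smul] at hα₁; exact hb₁ hα₁
  have hE : ∀ i l, x i * z b₁ l = α₁ * (![!![1, 0; 0, 0], !![0, 0; 1, 0],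
      Matrix.of fun i j => e 0 i * (if j = 1 then 1 else 0),
      Matrix.of fun i j => e 1 i * (if j = 1 then 1 else 0)]) (f a₀ b₁) i l := by
    intro i l
    have h := congrFun (congrFun ((hTB b₁).symm.trans hα₁) i) l
    simpa [Matrix.smul_apply] using h
  have hxcase : (x 0 ≠ 0 ∧ x 1 = 0) ∨ (x 1 ≠ 0 ∧ x 0 = 0) := by
    rcases hf₁ with h|h
    · left
      have e00 : x 0 * z b₁ 0 = α₁ := by have h' := hE 0 0; rw [h] at h'; simpa using h'
      have e10 : x 1 * z b₁ 0 = 0 := by have h' := hE 1 0; rw [h] at h'; simpa using h'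
      have hz0 : z b₁ 0 ≠ 0 := by
        intro hzz; rw [hzz, mul_zero] at e00; exact hα₁0 e00.symm
      refine ⟨?_, (mul_eq_zero.mp e10).resolve_right hz0⟩
      intro hxx; rw [hxx, zero_mul] at e00; exact hα₁0 e00.symm
    · right
      have e00 : x 1 * z b₁ 0 = α₁ := by have h' := hE 1 0; rw [h] at h'; simpa using h'
      have e10 : x 0 * z b₁ 0 = 0 := by have h' := hE 0 0; rw [h] at h'; simpa using h'
      have hz0 : z b₁ 0 ≠ 0 := by
        intro hzz; rw [hzz, mul_zero] at e00; exact hα₁0 e00.symm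
      refine ⟨?_, (mul_eq_zero.mp e10).resolve_right hz0⟩
      intro hxx; rw [hxx, zero_mul] at e00; exact hα₁0 e00.symm
  -- Step F
  obtain ⟨b₂, hb₂, i₂, hbM₂⟩ := main 1
  have hf₂ : f a₀ b₂ = 2 ∨ f a₀ b₂ = 3 := by
    rcases h4 (f a₀ b₂) with h|h|h|h
    · rw [h] at hbM₂; exact absurd (by fin_cases i₂ <;> simp) hbM₂
    · rw [h] at hbM₂; exact absurd (by fin_cases i₂ <;> simp) hbM₂
    · exact Or.inl h
    · exact Or.inr h
  obtain ⟨α₂, hα₂⟩ := hloc a₀ b₂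
  have hα₂0 : α₂ ≠ 0 := by rintro rfl; rw [zero_smul] at hα₂; exact hb₂ hα₂
  have hF : ∀ i l, x i * z b₂ l = α₂ * (![!![1, 0; 0, 0], !![0, 0; 1, 0],
      Matrix.of fun i j => e 0 i * (if j = 1 then 1 else 0),
      Matrix.of fun i j => e 1 i * (if j = 1 then 1 else 0)]) (f a₀ b₂) i l := by
    intro i l
    have h := congrFun (congrFun ((hTB b₂).symm.trans hα₂) i) l
    simpa [Matrix.smul_apply] using h
  obtain ⟨m, hm⟩ : ∃ m : Fin 2, ∀ i, x i * z b₂ 1 = α₂ * e m i := by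
    rcases hf₂ with h|h
    · exact ⟨0, fun i => by have h' := hF i 1; rw [h] at h'; simpa using h'⟩
    · exact ⟨1, fun i => by have h' := hF i 1; rw [h] at h'; simpa using h'⟩
  rcases hxcase with ⟨hx00, hx1⟩ | ⟨hx10, hx0'⟩
  · have hz : e m 1 = 0 := by
      have h' := hm 1; rw [hx1, zero_mul] at h'
      exact (mul_eq_zero.mp h'.symm).resolve_left hα₂0
    exact final_step e he m 1 hz
  · have hz : e m 0 = 0 := by
      have h' := hm 0; rw [hx0', zero_mul] at h'
      exact (mul_eq_zero.mp h'.symm).resolve_left hα₂0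
    exact final_step e he m 0 hz
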